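/- For a squarefree positive integer q and residues a, b mod q, the number of lifts (a', b') mod q⁴ of (a, b) such that there is no prime p ∣ q with p² ∣ a' and p⁴ ∣ b' equals ∏_{p ∣ q, p ∤ a or p ∤ b} p⁶ · ∏_{p ∣ q, p ∣ a and p ∣ b} (p⁶ − p²). -/

import Mathlib

open Finset

section CountAdmissibleLiftsAux


lemma fiber_card {m n : ℕ} [NeZero n] (h : m ∣ n) (c : ZMod m) :
    Nat.card {x : ZMod n // ZMod.castHom h (ZMod m) x = c} = n / m := by
  classical
  haveI hm : NeZero m := ⟨fun h0 => NeZero.ne n (by subst h0; exact Nat.eq_zero_of_zero_dvd h)⟩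
  set f := (ZMod.castHom h (ZMod m)).toAddMonoidHom with hf
  have hsurj : Function.Surjective f := by
    intro c
    obtain ⟨k, rfl⟩ := ZMod.intCast_surjective c
    exact ⟨(k : ZMod n), by simp [f]⟩
  obtain ⟨x₀, hx₀'⟩ := hsurj c
  have hx₀ : ZMod.castHom h (ZMod m) x₀ = c := hx₀'
  have e : {x : ZMod n // ZMod.castHom h (ZMod m) x = c} ≃ f.ker :=
    { toFun := fun x => ⟨x.1 - x₀, by
        rw [AddMonoidHom.mem_ker]
        show ZMod.castHom h (ZMod m) (x.1 - x₀) = 0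
        rw [map_sub, x.2, hx₀, sub_self]⟩
      invFun := fun k => ⟨k.1 + x₀, by
        have hk : ZMod.castHom h (ZMod m) k.1 = 0 := k.2
        rw [map_add, hk, hx₀, zero_add]⟩
      left_inv := fun x => by simp; rfl
      right_inv := fun k => by simp }
  rw [Nat.card_congr e]
  have h1 := AddSubgroup.card_eq_card_quotient_mul_card_addSubgroup f.ker
  have h2 : Nat.card (ZMod n ⧸ f.ker) = m := by
    rw [Nat.card_congr (QuotientAddGroup.quotientKerEquivOfSurjective f hsurj).toEquiv,
      Nat.card_zmod]
  rw [Nat.card_zmod, h2] at h1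
  exact (Nat.div_eq_of_eq_mul_left (Nat.pos_of_ne_zero hm.ne) (h1.trans (Nat.mul_comm _ _))).symm

lemma dvd_val_iff {m n : ℕ} [NeZero n] (h : m ∣ n) (x : ZMod n) :
    m ∣ x.val ↔ ZMod.castHom h (ZMod m) x = 0 := by
  rw [ZMod.castHom_apply, ← ZMod.natCast_val, ZMod.natCast_eq_zero_iff]

lemma card_and_not {α : Type*} [Fintype α] (A C : α → Prop) :
    Nat.card {z : α // A z ∧ C z} + Nat.card {z : α // A z ∧ ¬ C z} = Nat.card {z : α // A z} := by
  classical
  rw [← Nat.card_sum]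
  exact Nat.card_congr
    (((Equiv.subtypeSubtypeEquivSubtypeInter A C).symm.sumCongr
      (Equiv.subtypeSubtypeEquivSubtypeInter A (fun z => ¬ C z)).symm).trans
      (Equiv.sumCompl (fun x : {z // A z} => C x.1)))

lemma crt_bij {ι : Type*} [Fintype ι] (a : ι → ℕ) (hc : Pairwise (Function.onFun Nat.Coprime a))
    {M : ℕ} (hM : ∏ i, a i = M) (hd : ∀ i, a i ∣ M) :
    Function.Bijective (fun (x : ZMod M) (i : ι) => ZMod.castHom (hd i) (ZMod (a i)) x) := by
  subst hM
  have key : Pi.ringHom (fun i => ZMod.castHom (hd i) (ZMod (a i)))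
      = ((ZMod.prodEquivPi a hc : ZMod (∏ i, a i) ≃+* Π i, ZMod (a i)) :
        ZMod (∏ i, a i) →+* Π i, ZMod (a i)) := RingHom.ext_zmod _ _
  have : (fun (x : ZMod (∏ i, a i)) (i : ι) => ZMod.castHom (hd i) (ZMod (a i)) x)
      = ⇑(ZMod.prodEquivPi a hc) := by
    exact congrArg DFunLike.coe key
  rw [this]
  exact (ZMod.prodEquivPi a hc).bijective


lemma card_subtype_prod {α β : Type*} (pp : α → Prop) (qq : β → Prop) :
    Nat.card {z : α × β // pp z.1 ∧ qq z.2} = Nat.card {x // pp x} * Nat.card {y // qq y} := by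
  rw [Nat.card_congr (Equiv.subtypeProdEquivProd), Nat.card_prod]

lemma prime_case (p : ℕ) (hp : p.Prime) (a b : ℤ) :
    Nat.card {z : ZMod (p ^ 4) × ZMod (p ^ 4) //
        ZMod.castHom (dvd_pow_self p (by norm_num : (4 : ℕ) ≠ 0)) (ZMod p) z.1 = (a : ZMod p) ∧
        ZMod.castHom (dvd_pow_self p (by norm_num : (4 : ℕ) ≠ 0)) (ZMod p) z.2 = (b : ZMod p) ∧
        ¬ (p ^ 2 ∣ z.1.val ∧ p ^ 4 ∣ z.2.val)} =
      if (p : ℤ) ∣ a ∧ (p : ℤ) ∣ b then p ^ 6 - p ^ 2 else p ^ 6 := by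
  classical
  haveI : NeZero p := ⟨hp.pos.ne'⟩
  haveI : NeZero (p ^ 4) := ⟨pow_ne_zero _ hp.pos.ne'⟩
  have hd : p ∣ p ^ 4 := dvd_pow_self p (by norm_num)
  set A : ZMod (p ^ 4) × ZMod (p ^ 4) → Prop := fun z =>
    ZMod.castHom hd (ZMod p) z.1 = (a : ZMod p) ∧ ZMod.castHom hd (ZMod p) z.2 = (b : ZMod p)
    with hA
  set C : ZMod (p ^ 4) × ZMod (p ^ 4) → Prop := fun z =>
    p ^ 2 ∣ z.1.val ∧ p ^ 4 ∣ z.2.val with hC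
  have e1 : {z : ZMod (p ^ 4) × ZMod (p ^ 4) //
        ZMod.castHom (dvd_pow_self p (by norm_num : (4 : ℕ) ≠ 0)) (ZMod p) z.1 = (a : ZMod p) ∧
        ZMod.castHom (dvd_pow_self p (by norm_num : (4 : ℕ) ≠ 0)) (ZMod p) z.2 = (b : ZMod p) ∧
        ¬ (p ^ 2 ∣ z.1.val ∧ p ^ 4 ∣ z.2.val)} ≃ {z // A z ∧ ¬ C z} :=
    Equiv.subtypeEquivRight (fun z => by simp only [hA, hC]; tauto)
  rw [Nat.card_congr e1]
  -- count A
  have h43 : p ^ 4 / p = p ^ 3 := by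
    rw [pow_succ, Nat.mul_div_cancel _ hp.pos]
  have hAcard : Nat.card {z // A z} = p ^ 3 * p ^ 3 := by
    have h' := card_subtype_prod
      (fun x : ZMod (p ^ 4) => ZMod.castHom hd (ZMod p) x = (a : ZMod p))
      (fun y : ZMod (p ^ 4) => ZMod.castHom hd (ZMod p) y = (b : ZMod p))
    rw [fiber_card hd, fiber_card hd, h43] at h'
    exact h'
  -- count X
  have hX : Nat.card {x : ZMod (p ^ 4) //
      ZMod.castHom hd (ZMod p) x = (a : ZMod p) ∧ p ^ 2 ∣ x.val} =
      if (p : ℤ) ∣ a then p ^ 2 else 0 := by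
    have h2d : p ^ 2 ∣ p ^ 4 := pow_dvd_pow p (by norm_num)
    by_cases hpa : (p : ℤ) ∣ a
    · have ha0 : (a : ZMod p) = 0 := (ZMod.intCast_zmod_eq_zero_iff_dvd a p).mpr hpa
      have hiff : ∀ x : ZMod (p ^ 4),
          (ZMod.castHom hd (ZMod p) x = (a : ZMod p) ∧ p ^ 2 ∣ x.val) ↔
          ZMod.castHom h2d (ZMod (p ^ 2)) x = 0 := by
        intro x
        constructor
        · rintro ⟨-, h⟩; exact (dvd_val_iff h2d x).mp h
        · intro h
          have hv : p ^ 2 ∣ x.val := (dvd_val_iff h2d x).mpr h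
          have hpx : p ∣ x.val := dvd_trans (dvd_pow_self p two_ne_zero) hv
          exact ⟨((dvd_val_iff hd x).mp hpx).trans ha0.symm, hv⟩
      rw [Nat.card_congr (Equiv.subtypeEquivRight hiff), fiber_card h2d, if_pos hpa]
      rw [show (4 : ℕ) = 2 + 2 from rfl, pow_add,
        Nat.mul_div_cancel_left _ (pow_pos hp.pos 2)]
    · rw [if_neg hpa]
      haveI : IsEmpty {x : ZMod (p ^ 4) //
          ZMod.castHom hd (ZMod p) x = (a : ZMod p) ∧ p ^ 2 ∣ x.val} := by
        refine ⟨fun x => hpa ?_⟩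
        have hpx : p ∣ x.1.val := dvd_trans (dvd_pow_self p two_ne_zero) x.2.2
        have : (a : ZMod p) = 0 := x.2.1 ▸ (dvd_val_iff hd x.1).mp hpx
        exact (ZMod.intCast_zmod_eq_zero_iff_dvd a p).mp this
      exact Nat.card_of_isEmpty
  -- count Y
  have hval : ∀ y : ZMod (p ^ 4), p ^ 4 ∣ y.val ↔ y = 0 := by
    intro y
    constructor
    · intro h
      by_contra hy
      have hv : y.val ≠ 0 := fun h0 => hy ((ZMod.val_eq_zero y).mp h0)
      exact absurd (ZMod.val_lt y) (not_lt.mpr (Nat.le_of_dvd (Nat.pos_of_ne_zero hv) h))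
    · rintro rfl; simp
  have hY : Nat.card {y : ZMod (p ^ 4) //
      ZMod.castHom hd (ZMod p) y = (b : ZMod p) ∧ p ^ 4 ∣ y.val} =
      if (p : ℤ) ∣ b then 1 else 0 := by
    by_cases hpb : (p : ℤ) ∣ b
    · have hb0 : (b : ZMod p) = 0 := (ZMod.intCast_zmod_eq_zero_iff_dvd b p).mpr hpb
      have hiff : ∀ y : ZMod (p ^ 4),
          (ZMod.castHom hd (ZMod p) y = (b : ZMod p) ∧ p ^ 4 ∣ y.val) ↔ y = 0 := by
        intro y
        constructor
        · rintro ⟨-, h⟩; exact (hval y).mp h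
        · rintro rfl
          exact ⟨(map_zero _).trans hb0.symm, (hval 0).mpr rfl⟩
      rw [Nat.card_congr (Equiv.subtypeEquivRight hiff), if_pos hpb,
        Nat.card_eq_fintype_card, Fintype.card_subtype_eq]
    · rw [if_neg hpb]
      haveI : IsEmpty {y : ZMod (p ^ 4) //
          ZMod.castHom hd (ZMod p) y = (b : ZMod p) ∧ p ^ 4 ∣ y.val} := by
        refine ⟨fun y => hpb ?_⟩
        have h0 : y.1 = 0 := (hval y.1).mp y.2.2
        have : (b : ZMod p) = 0 := y.2.1 ▸ (by rw [h0, map_zero])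
        exact (ZMod.intCast_zmod_eq_zero_iff_dvd b p).mp this
      exact Nat.card_of_isEmpty
  -- count A ∧ C
  have hACcard : Nat.card {z // A z ∧ C z} =
      (if (p : ℤ) ∣ a then p ^ 2 else 0) * (if (p : ℤ) ∣ b then 1 else 0) := by
    have hiff : ∀ z : ZMod (p ^ 4) × ZMod (p ^ 4), (A z ∧ C z) ↔
        ((ZMod.castHom hd (ZMod p) z.1 = (a : ZMod p) ∧ p ^ 2 ∣ z.1.val) ∧
         (ZMod.castHom hd (ZMod p) z.2 = (b : ZMod p) ∧ p ^ 4 ∣ z.2.val)) := by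
      intro z; simp only [hA, hC]; tauto
    have h' := card_subtype_prod
      (fun x : ZMod (p ^ 4) => ZMod.castHom hd (ZMod p) x = (a : ZMod p) ∧ p ^ 2 ∣ x.val)
      (fun y : ZMod (p ^ 4) => ZMod.castHom hd (ZMod p) y = (b : ZMod p) ∧ p ^ 4 ∣ y.val)
    rw [hX, hY] at h'
    exact (Nat.card_congr (Equiv.subtypeEquivRight hiff)).trans h'
  have key := card_and_not A C
  rw [hAcard, hACcard] at key
  by_cases h : (p : ℤ) ∣ a ∧ (p : ℤ) ∣ b
  · rw [if_pos h]
    rw [if_pos h.1, if_pos h.2] at key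
    have h6 : p ^ 2 * 1 + Nat.card {z // A z ∧ ¬C z} = p ^ 6 := by
      rw [key]; ring
    have : p ^ 6 = Nat.card {z // A z ∧ ¬C z} + p ^ 2 := by rw [← h6]; ring
    rw [this, Nat.add_sub_cancel]
  · rw [if_neg h]
    have hz : (if (p : ℤ) ∣ a then p ^ 2 else 0) * (if (p : ℤ) ∣ b then 1 else 0) = 0 := by
      rcases not_and_or.mp h with h' | h' <;> simp [h']
    rw [hz, zero_add] at key
    rw [key]; ring


/-- pairs of pi types -/
def pairPi {ι : Type*} (α β : ι → Type*) : ((∀ i, α i) × (∀ i, β i)) ≃ (∀ i, α i × β i) where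
  toFun w i := (w.1 i, w.2 i)
  invFun f := (fun i => (f i).1, fun i => (f i).2)
  left_inv w := rfl
  right_inv f := rfl

lemma comp_eq {N k m : ℕ} (h1 : k ∣ m) (h2 : m ∣ N) (h3 : k ∣ N) (x : ZMod N) :
    ZMod.castHom h1 (ZMod k) (ZMod.castHom h2 (ZMod m) x) = ZMod.castHom h3 (ZMod k) x :=
  RingHom.congr_fun (RingHom.ext_zmod
    ((ZMod.castHom h1 (ZMod k)).comp (ZMod.castHom h2 (ZMod m)))
    (ZMod.castHom h3 (ZMod k))) x

/-- For a squarefree positive integer `q` and residues `a, b` mod `q`, the number of lifts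
`(a', b')` mod `q⁴` of `(a, b)` such that there is no prime `p ∣ q` with `p² ∣ a'` and
`p⁴ ∣ b'` equals `∏_{p ∣ q, p ∤ a or p ∤ b} p⁶ · ∏_{p ∣ q, p ∣ a and p ∣ b} (p⁶ - p²)`. -/
theorem count_admissible_lifts (q : ℕ) (hq : Squarefree q) (hq0 : 0 < q) (a b : ℤ) :
    Nat.card {x : ZMod (q ^ 4) × ZMod (q ^ 4) //
        (ZMod.castHom (dvd_pow_self q (by norm_num : (4 : ℕ) ≠ 0)) (ZMod q) x.1
            = (a : ZMod q)) ∧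
        (ZMod.castHom (dvd_pow_self q (by norm_num : (4 : ℕ) ≠ 0)) (ZMod q) x.2
            = (b : ZMod q)) ∧
        ∀ p ∈ q.primeFactors, ¬ (p ^ 2 ∣ x.1.val ∧ p ^ 4 ∣ x.2.val)} =
      ∏ p ∈ q.primeFactors,
        (if (p : ℤ) ∣ a ∧ (p : ℤ) ∣ b then p ^ 6 - p ^ 2 else p ^ 6) := by
  classical
  haveI : NeZero q := ⟨hq0.ne'⟩
  haveI : NeZero (q ^ 4) := ⟨pow_ne_zero _ hq0.ne'⟩
  set F := q.primeFactors with hF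
  have hprime : ∀ i : F, (i : ℕ).Prime := fun i => Nat.prime_of_mem_primeFactors i.2
  haveI hne4 : ∀ i : F, NeZero ((i : ℕ) ^ 4) := fun i => ⟨pow_ne_zero _ (hprime i).pos.ne'⟩
  have hdvd : ∀ i : F, (i : ℕ) ∣ q := fun i => Nat.dvd_of_mem_primeFactors i.2
  have hcop4 : Pairwise (Function.onFun Nat.Coprime fun i : F => (i : ℕ) ^ 4) := fun i j hij =>
    Nat.Coprime.pow _ _ ((Nat.coprime_primes (hprime i) (hprime j)).mpr
      (fun h => hij (Subtype.ext h)))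
  have hcop1 : Pairwise (Function.onFun Nat.Coprime fun i : F => (i : ℕ)) := fun i j hij =>
    (Nat.coprime_primes (hprime i) (hprime j)).mpr (fun h => hij (Subtype.ext h))
  have hM1 : ∏ i : F, (i : ℕ) = q := by
    have h' : ∏ i : F, (i : ℕ) = ∏ p ∈ F, p :=
      Finset.prod_coe_sort (f := fun p : ℕ => p) (s := F)
    rw [h']; exact Nat.prod_primeFactors_of_squarefree hq
  have hM4 : ∏ i : F, (i : ℕ) ^ 4 = q ^ 4 := by
    have h' : ∏ i : F, (i : ℕ) ^ 4 = ∏ p ∈ F, p ^ 4 :=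
      Finset.prod_coe_sort (f := fun p : ℕ => p ^ 4) (s := F)
    rw [h', Finset.prod_pow, Nat.prod_primeFactors_of_squarefree hq]
  have hd4 : ∀ i : F, (i : ℕ) ^ 4 ∣ q ^ 4 := fun i => pow_dvd_pow_of_dvd (hdvd i) 4
  have hqd : q ∣ q ^ 4 := dvd_pow_self q (by norm_num)
  have hiq4 : ∀ i : F, (i : ℕ) ∣ q ^ 4 := fun i => (hdvd i).trans hqd
  have hi2q4 : ∀ i : F, (i : ℕ) ^ 2 ∣ q ^ 4 :=
    fun i => (pow_dvd_pow_of_dvd (hdvd i) 2).trans (pow_dvd_pow q (by norm_num))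
  have hΦ := crt_bij (fun i : F => (i : ℕ) ^ 4) hcop4 hM4 hd4
  have hΨ := crt_bij (fun i : F => (i : ℕ)) hcop1 hM1 hdvd
  set Φ : ZMod (q ^ 4) → ∀ i : F, ZMod ((i : ℕ) ^ 4) :=
    fun x i => ZMod.castHom (hd4 i) (ZMod ((i : ℕ) ^ 4)) x with hΦdef
  -- condition translations
  have hT1 : ∀ (x : ZMod (q ^ 4)) (c : ℤ), (ZMod.castHom hqd (ZMod q) x = (c : ZMod q) ↔
      ∀ i : F, ZMod.castHom (dvd_pow_self (i : ℕ) (by norm_num : (4 : ℕ) ≠ 0))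
        (ZMod (i : ℕ)) (Φ x i) = (c : ZMod (i : ℕ))) := by
    intro x c
    constructor
    · intro h i
      rw [hΦdef]
      rw [comp_eq _ (hd4 i) (hiq4 i) x, ← comp_eq (hdvd i) hqd (hiq4 i) x, h, map_intCast]
    · intro h
      apply hΨ.1
      funext i
      show ZMod.castHom (hdvd i) (ZMod (i : ℕ)) (ZMod.castHom hqd (ZMod q) x)
        = ZMod.castHom (hdvd i) (ZMod (i : ℕ)) ((c : ZMod q))
      rw [comp_eq (hdvd i) hqd (hiq4 i) x, map_intCast,
        ← comp_eq (dvd_pow_self (i : ℕ) (by norm_num : (4 : ℕ) ≠ 0)) (hd4 i) (hiq4 i) x]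
      exact h i
  have hT2 : ∀ (x : ZMod (q ^ 4)) (i : F), ((i : ℕ) ^ 2 ∣ x.val ↔ (i : ℕ) ^ 2 ∣ (Φ x i).val) := by
    intro x i
    rw [dvd_val_iff (hi2q4 i) x, dvd_val_iff (pow_dvd_pow (i : ℕ) (by norm_num)) (Φ x i),
      hΦdef, comp_eq _ (hd4 i) (hi2q4 i) x]
  have hT3 : ∀ (x : ZMod (q ^ 4)) (i : F), ((i : ℕ) ^ 4 ∣ x.val ↔ (i : ℕ) ^ 4 ∣ (Φ x i).val) := by
    intro x i
    rw [dvd_val_iff (hd4 i) x, dvd_val_iff (dvd_refl ((i : ℕ) ^ 4)) (Φ x i),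
      hΦdef, comp_eq _ (hd4 i) (hd4 i) x]
  -- the predicate on factors
  set Q : ∀ i : F, ZMod ((i : ℕ) ^ 4) × ZMod ((i : ℕ) ^ 4) → Prop := fun i zz =>
    ZMod.castHom (dvd_pow_self (i : ℕ) (by norm_num : (4 : ℕ) ≠ 0)) (ZMod (i : ℕ)) zz.1
        = (a : ZMod (i : ℕ)) ∧
    ZMod.castHom (dvd_pow_self (i : ℕ) (by norm_num : (4 : ℕ) ≠ 0)) (ZMod (i : ℕ)) zz.2
        = (b : ZMod (i : ℕ)) ∧
    ¬ ((i : ℕ) ^ 2 ∣ zz.1.val ∧ (i : ℕ) ^ 4 ∣ zz.2.val) with hQ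
  have hPiff : ∀ z : ZMod (q ^ 4) × ZMod (q ^ 4),
      ((ZMod.castHom (dvd_pow_self q (by norm_num : (4 : ℕ) ≠ 0)) (ZMod q) z.1 = (a : ZMod q)) ∧
       (ZMod.castHom (dvd_pow_self q (by norm_num : (4 : ℕ) ≠ 0)) (ZMod q) z.2 = (b : ZMod q)) ∧
       ∀ p ∈ q.primeFactors, ¬ (p ^ 2 ∣ z.1.val ∧ p ^ 4 ∣ z.2.val)) ↔
      ∀ i : F, Q i (Φ z.1 i, Φ z.2 i) := by
    intro z
    rw [hQ]
    constructor
    · rintro ⟨h1, h2, h3⟩ i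
      refine ⟨(hT1 z.1 a).mp h1 i, (hT1 z.2 b).mp h2 i, ?_⟩
      intro ⟨hu, hv⟩
      exact h3 i i.2 ⟨(hT2 z.1 i).mpr hu, (hT3 z.2 i).mpr hv⟩
    · intro h
      refine ⟨(hT1 z.1 a).mpr (fun i => (h i).1), (hT1 z.2 b).mpr (fun i => (h i).2.1), ?_⟩
      intro p hp ⟨hu, hv⟩
      exact (h ⟨p, hp⟩).2.2 ⟨(hT2 z.1 ⟨p, hp⟩).mp hu, (hT3 z.2 ⟨p, hp⟩).mp hv⟩
  -- build the equiv
  let EΦ : ZMod (q ^ 4) ≃ ∀ i : F, ZMod ((i : ℕ) ^ 4) := Equiv.ofBijective Φ hΦ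
  have e2 : {x : ZMod (q ^ 4) × ZMod (q ^ 4) //
        (ZMod.castHom (dvd_pow_self q (by norm_num : (4 : ℕ) ≠ 0)) (ZMod q) x.1
            = (a : ZMod q)) ∧
        (ZMod.castHom (dvd_pow_self q (by norm_num : (4 : ℕ) ≠ 0)) (ZMod q) x.2
            = (b : ZMod q)) ∧
        ∀ p ∈ q.primeFactors, ¬ (p ^ 2 ∣ x.1.val ∧ p ^ 4 ∣ x.2.val)} ≃
      ∀ i : F, {zz : ZMod ((i : ℕ) ^ 4) × ZMod ((i : ℕ) ^ 4) // Q i zz} := by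
    refine (Equiv.subtypeEquiv ((EΦ.prodCongr EΦ).trans
      (pairPi (fun i : F => ZMod ((i : ℕ) ^ 4)) (fun i : F => ZMod ((i : ℕ) ^ 4))))
      (fun z => ?_)).trans (Equiv.subtypePiEquivPi)
    exact hPiff z
  rw [Nat.card_congr e2, Nat.card_pi]
  have h' : ∏ i : F, (fun p : ℕ => if (p : ℤ) ∣ a ∧ (p : ℤ) ∣ b
      then p ^ 6 - p ^ 2 else p ^ 6) (i : ℕ) = ∏ p ∈ F, (fun p : ℕ => if (p : ℤ) ∣ a ∧ (p : ℤ) ∣ b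
      then p ^ 6 - p ^ 2 else p ^ 6) p :=
    Finset.prod_coe_sort (f := fun p : ℕ => if (p : ℤ) ∣ a ∧ (p : ℤ) ∣ b
      then p ^ 6 - p ^ 2 else p ^ 6) (s := F)
  rw [← h']
  exact Finset.prod_congr rfl (fun i _ => prime_case (i : ℕ) (hprime i) a b)

end CountAdmissibleLiftsAux
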